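/- (Theorem 1(ii): the IRP limiter preserves the invariant region.) Let γ > 1, s₀ ∈ ℝ, ε > 0, let I ⊂ ℝ be a compact interval of positive length, and let w_h : I → ℝ³ be continuous with ρ_h(x) > 0 and p(w_h(x)) > 0 for all x ∈ I. Suppose the average w̄_h ∈ Σ^ε₀ and that ρ_min < ρ̄_h, p_min < p(w̄_h), q_max > q(w̄_h). Define θ₁ = (ρ̄_h − ε)/(ρ̄_h − ρ_min), θ₂ = (p(w̄_h) − ε)/(p(w̄_h) − p_min), θ₃ = (−q(w̄_h))/(q_max − q(w̄_h)), θ = min{1, θ₁, θ₂, θ₃}, and w̃_h(x) = θ·w_h(x) + (1 − θ)·w̄_h. Then w̃_h(x) ∈ Σ^ε for all x ∈ I, i.e., ρ̃_h(x) ≥ ε, p(w̃_h(x)) ≥ ε, and q(w̃_h(x)) ≤ 0. -/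

import Mathlib

open Real MeasureTheory

/-- Pressure of a state `w = (ρ, m, E)` for adiabatic exponent `γ`:
`p(w) = (γ − 1)(E − m²/(2ρ))`. -/
noncomputable def press (γ : ℝ) (w : ℝ × ℝ × ℝ) : ℝ :=
  (γ - 1) * (w.2.2 - w.2.1 ^ 2 / (2 * w.1))

/-- Specific entropy `s(w) = log(p(w)/ρ^γ)`. -/
noncomputable def entr (γ : ℝ) (w : ℝ × ℝ × ℝ) : ℝ :=
  Real.log (press γ w / w.1 ^ γ)

/-- `q(w) = (s₀ − s(w))·ρ`. -/
noncomputable def qf (γ s₀ : ℝ) (w : ℝ × ℝ × ℝ) : ℝ :=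
  (s₀ - entr γ w) * w.1

private lemma tangent_log (x y u : ℝ) (hx : 0 < x) (hy : 0 < y) (hu : 0 < u) :
    x * Real.log u + x - y * u ≤ x * Real.log (x / y) := by
  have hq : 0 < y * u / x := by positivity
  have h := Real.log_le_sub_one_of_pos hq
  have e : Real.log (y * u / x) = Real.log y + Real.log u - Real.log x := by
    rw [Real.log_div (by positivity) hx.ne', Real.log_mul hy.ne' hu.ne']
  have e2 : Real.log (x / y) = Real.log x - Real.log y := Real.log_div hx.ne' hy.ne'
  have h3 : x * Real.log (y * u / x) ≤ x * (y * u / x - 1) :=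
    mul_le_mul_of_nonneg_left h hx.le
  have h4 : x * (y * u / x - 1) = y * u - x := by field_simp
  rw [e] at h3
  rw [e2]
  nlinarith [h3, h4]

private lemma log_sum_two (a b c d : ℝ) (ha : 0 < a) (hb : 0 < b) (hc : 0 < c) (hd : 0 < d) :
    (a + c) * Real.log ((a + c) / (b + d)) ≤ a * Real.log (a / b) + c * Real.log (c / d) := by
  have hu : 0 < (a + c) / (b + d) := by positivity
  have h1 := tangent_log a b ((a + c) / (b + d)) ha hb hu
  have h2 := tangent_log c d ((a + c) / (b + d)) hc hd hu
  have h3 : (b + d) * ((a + c) / (b + d)) = a + c := by field_simp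
  nlinarith [h1, h2, h3]

private lemma qf_eq (γ s₀ : ℝ) (w : ℝ × ℝ × ℝ) (hρ : 0 < w.1) (hp : 0 < press γ w) :
    qf γ s₀ w = s₀ * w.1 - w.1 * Real.log (press γ w) + γ * (w.1 * Real.log w.1) := by
  unfold qf entr
  rw [Real.log_div hp.ne' (Real.rpow_pos_of_pos hρ γ).ne', Real.log_rpow hρ]
  ring

private lemma frac_ineq (θ r rb m mb : ℝ) (hθ : 0 < θ) (h1 : 0 ≤ 1 - θ)
    (hr : 0 < r) (hrb : 0 < rb) :
    (θ * m + (1 - θ) * mb) ^ 2 / (2 * (θ * r + (1 - θ) * rb))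
      ≤ θ * (m ^ 2 / (2 * r)) + (1 - θ) * (mb ^ 2 / (2 * rb)) := by
  have hrt : 0 < θ * r + (1 - θ) * rb := by
    nlinarith [mul_pos hθ hr, mul_nonneg h1 hrb.le]
  have e : θ * (m ^ 2 / (2 * r)) + (1 - θ) * (mb ^ 2 / (2 * rb))
      = (θ * m ^ 2 * rb + (1 - θ) * mb ^ 2 * r) / (2 * (r * rb)) := by
    field_simp
  rw [e, div_le_div_iff₀ (by positivity) (by positivity)]
  nlinarith [mul_nonneg (mul_nonneg hθ.le h1) (sq_nonneg (m * rb - mb * r)), mul_pos hr hrb]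

private lemma press_concave (γ θ r rb m mb E Eb : ℝ) (hγ : 1 < γ) (hθ : 0 < θ)
    (h1 : 0 ≤ 1 - θ) (hr : 0 < r) (hrb : 0 < rb) :
    θ * ((γ - 1) * (E - m ^ 2 / (2 * r))) + (1 - θ) * ((γ - 1) * (Eb - mb ^ 2 / (2 * rb)))
      ≤ (γ - 1) * ((θ * E + (1 - θ) * Eb)
        - (θ * m + (1 - θ) * mb) ^ 2 / (2 * (θ * r + (1 - θ) * rb))) := by
  have h := frac_ineq θ r rb m mb hθ h1 hr hrb
  have h2 := mul_le_mul_of_nonneg_left h (by linarith : (0:ℝ) ≤ γ - 1)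
  nlinarith [h2]

private lemma q_combo (γ s₀ θ r rb p pb P : ℝ) (hγ : 1 < γ) (hθ : 0 < θ) (hθ1 : θ < 1)
    (hr : 0 < r) (hrb : 0 < rb) (hp : 0 < p) (hpb : 0 < pb)
    (hP : θ * p + (1 - θ) * pb ≤ P) :
    s₀ * (θ * r + (1 - θ) * rb) - (θ * r + (1 - θ) * rb) * Real.log P
      + γ * ((θ * r + (1 - θ) * rb) * Real.log (θ * r + (1 - θ) * rb))
    ≤ θ * (s₀ * r - r * Real.log p + γ * (r * Real.log r))
      + (1 - θ) * (s₀ * rb - rb * Real.log pb + γ * (rb * Real.log rb)) := by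
  have h1 : 0 < 1 - θ := by linarith
  have hrt : 0 < θ * r + (1 - θ) * rb := by nlinarith [mul_pos hθ hr, mul_pos h1 hrb]
  have hP0 : 0 < θ * p + (1 - θ) * pb := by nlinarith [mul_pos hθ hp, mul_pos h1 hpb]
  have hA := log_sum_two (θ * r) (θ * p) ((1 - θ) * rb) ((1 - θ) * pb)
    (mul_pos hθ hr) (mul_pos hθ hp) (mul_pos h1 hrb) (mul_pos h1 hpb)
  rw [mul_div_mul_left _ _ hθ.ne', mul_div_mul_left _ _ h1.ne'] at hA
  rw [Real.log_div hrt.ne' hP0.ne', Real.log_div hr.ne' hp.ne',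
    Real.log_div hrb.ne' hpb.ne'] at hA
  have hB := Real.convexOn_mul_log.2 (Set.mem_Ici.2 hr.le) (Set.mem_Ici.2 hrb.le)
    hθ.le h1.le (by ring)
  simp only [smul_eq_mul] at hB
  have hB' := mul_le_mul_of_nonneg_left hB (by linarith : (0:ℝ) ≤ γ - 1)
  have hmono : (θ * r + (1 - θ) * rb) * Real.log (θ * p + (1 - θ) * pb)
      ≤ (θ * r + (1 - θ) * rb) * Real.log P :=
    mul_le_mul_of_nonneg_left (Real.log_le_log hP0 hP) hrt.le
  nlinarith [hA, hB', hmono]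

set_option maxHeartbeats 1000000 in
/-- Theorem 1(ii): the IRP limiter preserves the invariant region:
With `w̄_h ∈ Σ^ε₀`, `ρ_min < ρ̄_h`, `p_min < p(w̄_h)`, `q_max > q(w̄_h)`, and
`θ = min{1, θ₁, θ₂, θ₃}`, the limited polynomial `w̃_h(x) = θ·w_h(x) + (1 − θ)·w̄_h`
lies in `Σ^ε` for all `x ∈ I`: `ρ̃_h ≥ ε`, `p(w̃_h) ≥ ε`, `q(w̃_h) ≤ 0`. -/
theorem IRP_limiter_preserves_invariant_region (γ s₀ ε : ℝ) (hγ : 1 < γ) (hε : 0 < ε)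
    (a b : ℝ) (hab : a < b)
    (wh : ℝ → ℝ × ℝ × ℝ) (hwc : ContinuousOn wh (Set.Icc a b))
    (hρ : ∀ x ∈ Set.Icc a b, 0 < (wh x).1)
    (hp : ∀ x ∈ Set.Icc a b, 0 < press γ (wh x))
    (wbar : ℝ × ℝ × ℝ) (hwbar : wbar = (b - a)⁻¹ • ∫ x in a..b, wh x)
    (ρmin pmin qmax : ℝ)
    (hρmin : ρmin = sInf ((fun x => (wh x).1) '' Set.Icc a b))
    (hpmin : pmin = sInf ((fun x => press γ (wh x)) '' Set.Icc a b))
    (hqmax : qmax = sSup ((fun x => qf γ s₀ (wh x)) '' Set.Icc a b))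
    (hin : ε < wbar.1 ∧ ε < press γ wbar ∧ qf γ s₀ wbar < 0)
    (h1 : ρmin < wbar.1) (h2 : pmin < press γ wbar) (h3 : qf γ s₀ wbar < qmax)
    (θ₁ θ₂ θ₃ θ : ℝ)
    (hθ₁ : θ₁ = (wbar.1 - ε) / (wbar.1 - ρmin))
    (hθ₂ : θ₂ = (press γ wbar - ε) / (press γ wbar - pmin))
    (hθ₃ : θ₃ = (-qf γ s₀ wbar) / (qmax - qf γ s₀ wbar))
    (hθ : θ = min 1 (min θ₁ (min θ₂ θ₃))) :
    ∀ x ∈ Set.Icc a b,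
      ε ≤ (θ • wh x + (1 - θ) • wbar).1 ∧
      ε ≤ press γ (θ • wh x + (1 - θ) • wbar) ∧
      qf γ s₀ (θ • wh x + (1 - θ) • wbar) ≤ 0 := by
  obtain ⟨hin1, hin2, hin3⟩ := hin
  have hρb : 0 < wbar.1 := lt_trans hε hin1
  have hpb : 0 < press γ wbar := lt_trans hε hin2
  -- continuity
  have hcρ : ContinuousOn (fun x => (wh x).1) (Set.Icc a b) := hwc.fst
  have hcp : ContinuousOn (fun x => press γ (wh x)) (Set.Icc a b) := by
    apply ContinuousOn.mul continuousOn_const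
    apply ContinuousOn.sub (hwc.snd.snd)
    exact (hwc.snd.fst.pow 2).div (continuousOn_const.mul hcρ)
      (fun y hy => ne_of_gt (by have := hρ y hy; linarith))
  have hcq : ContinuousOn (fun x => qf γ s₀ (wh x)) (Set.Icc a b) := by
    unfold qf entr
    apply ContinuousOn.mul _ hcρ
    apply ContinuousOn.sub continuousOn_const
    apply ContinuousOn.log
    · exact hcp.div (hcρ.rpow_const (fun y hy => Or.inl (ne_of_gt (hρ y hy))))
        (fun y hy => (Real.rpow_pos_of_pos (hρ y hy) γ).ne')
    · intro y hy
      exact ne_of_gt (div_pos (hp y hy) (Real.rpow_pos_of_pos (hρ y hy) γ))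
  -- θ facts
  have hd1 : 0 < wbar.1 - ρmin := sub_pos.2 h1
  have hd2 : 0 < press γ wbar - pmin := sub_pos.2 h2
  have hd3 : 0 < qmax - qf γ s₀ wbar := sub_pos.2 h3
  have hθ1pos : 0 < θ₁ := hθ₁ ▸ div_pos (by linarith) hd1
  have hθ2pos : 0 < θ₂ := hθ₂ ▸ div_pos (by linarith) hd2
  have hθ3pos : 0 < θ₃ := hθ₃ ▸ div_pos (by linarith) hd3
  have hθpos : 0 < θ := by
    rw [hθ]; exact lt_min (by norm_num) (lt_min hθ1pos (lt_min hθ2pos hθ3pos))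
  have hθle1 : θ ≤ 1 := hθ ▸ min_le_left _ _
  have h1mθ : 0 ≤ 1 - θ := by linarith
  have hθleθ1 : θ ≤ θ₁ := hθ ▸ le_trans (min_le_right _ _) (min_le_left _ _)
  have hθleθ2 : θ ≤ θ₂ :=
    hθ ▸ le_trans (min_le_right _ _) (le_trans (min_le_right _ _) (min_le_left _ _))
  have hθleθ3 : θ ≤ θ₃ :=
    hθ ▸ le_trans (min_le_right _ _) (le_trans (min_le_right _ _) (min_le_right _ _))
  have key1 : θ * (wbar.1 - ρmin) ≤ wbar.1 - ε := by
    rw [hθ₁] at hθleθ1; exact (le_div_iff₀ hd1).mp hθleθ1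
  have key2 : θ * (press γ wbar - pmin) ≤ press γ wbar - ε := by
    rw [hθ₂] at hθleθ2; exact (le_div_iff₀ hd2).mp hθleθ2
  have key3 : θ * (qmax - qf γ s₀ wbar) ≤ -qf γ s₀ wbar := by
    rw [hθ₃] at hθleθ3; exact (le_div_iff₀ hd3).mp hθleθ3
  intro x hx
  have hρx : 0 < (wh x).1 := hρ x hx
  have hpx : 0 < press γ (wh x) := hp x hx
  have hρminle : ρmin ≤ (wh x).1 := by
    rw [hρmin]; exact csInf_le (isCompact_Icc.bddBelow_image hcρ) ⟨x, hx, rfl⟩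
  have hpminle : pmin ≤ press γ (wh x) := by
    rw [hpmin]; exact csInf_le (isCompact_Icc.bddBelow_image hcp) ⟨x, hx, rfl⟩
  have hqmaxge : qf γ s₀ (wh x) ≤ qmax := by
    rw [hqmax]; exact le_csSup (isCompact_Icc.bddAbove_image hcq) ⟨x, hx, rfl⟩
  have c1 : (θ • wh x + (1 - θ) • wbar).1 = θ * (wh x).1 + (1 - θ) * wbar.1 := by
    simp [Prod.fst_add, Prod.smul_fst, smul_eq_mul]
  have c2 : (θ • wh x + (1 - θ) • wbar).2.1 = θ * (wh x).2.1 + (1 - θ) * wbar.2.1 := by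
    simp [Prod.snd_add, Prod.smul_snd, Prod.fst_add, Prod.smul_fst, smul_eq_mul]
  have c3 : (θ • wh x + (1 - θ) • wbar).2.2 = θ * (wh x).2.2 + (1 - θ) * wbar.2.2 := by
    simp [Prod.snd_add, Prod.smul_snd, smul_eq_mul]
  have hρt : 0 < θ * (wh x).1 + (1 - θ) * wbar.1 := by
    nlinarith [mul_pos hθpos hρx, mul_nonneg h1mθ hρb.le]
  -- density
  have goal1 : ε ≤ (θ • wh x + (1 - θ) • wbar).1 := by
    rw [c1]
    linarith [mul_le_mul_of_nonneg_left hρminle hθpos.le, key1]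
  -- pressure concavity
  have hPexp : press γ (θ • wh x + (1 - θ) • wbar)
      = (γ - 1) * ((θ * (wh x).2.2 + (1 - θ) * wbar.2.2)
        - (θ * (wh x).2.1 + (1 - θ) * wbar.2.1) ^ 2
          / (2 * (θ * (wh x).1 + (1 - θ) * wbar.1))) := by
    unfold press; rw [c1, c2, c3]
  have hPge : θ * press γ (wh x) + (1 - θ) * press γ wbar
      ≤ press γ (θ • wh x + (1 - θ) • wbar) := by
    rw [hPexp]
    exact press_concave γ θ (wh x).1 wbar.1 (wh x).2.1 wbar.2.1 (wh x).2.2 wbar.2.2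
      hγ hθpos h1mθ hρx hρb
  have goal2 : ε ≤ press γ (θ • wh x + (1 - θ) • wbar) := by
    linarith [mul_le_mul_of_nonneg_left hpminle hθpos.le, key2, hPge]
  refine ⟨goal1, goal2, ?_⟩
  -- q part
  have hP0 : 0 < θ * press γ (wh x) + (1 - θ) * press γ wbar := by
    nlinarith [mul_pos hθpos hpx, mul_nonneg h1mθ hpb.le]
  have hPW : 0 < press γ (θ • wh x + (1 - θ) • wbar) := lt_of_lt_of_le hP0 hPge
  rcases eq_or_lt_of_le hθle1 with hθ1eq | hθlt
  · -- θ = 1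
    have hWx : θ • wh x + (1 - θ) • wbar = wh x := by rw [hθ1eq]; simp
    have hq3 : (1:ℝ) ≤ θ₃ := hθ1eq ▸ hθleθ3
    rw [hθ₃] at hq3
    have := (le_div_iff₀ hd3).mp hq3
    rw [hWx]
    linarith [hqmaxge]
  · -- θ < 1
    have eqW := qf_eq γ s₀ (θ • wh x + (1 - θ) • wbar) (c1 ▸ hρt) hPW
    rw [c1] at eqW
    have hQ := q_combo γ s₀ θ (wh x).1 wbar.1 (press γ (wh x)) (press γ wbar)
      (press γ (θ • wh x + (1 - θ) • wbar)) hγ hθpos hθlt hρx hρb hpx hpb hPge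
    have hq_xθ : θ * qf γ s₀ (wh x)
        = θ * (s₀ * (wh x).1 - (wh x).1 * Real.log (press γ (wh x))
          + γ * ((wh x).1 * Real.log (wh x).1)) := by
      rw [qf_eq γ s₀ (wh x) hρx hpx]
    have hq_bθ : (1 - θ) * qf γ s₀ wbar
        = (1 - θ) * (s₀ * wbar.1 - wbar.1 * Real.log (press γ wbar)
          + γ * (wbar.1 * Real.log wbar.1)) := by
      rw [qf_eq γ s₀ wbar hρb hpb]
    have hprod : θ * qf γ s₀ (wh x) ≤ θ * qmax :=
      mul_le_mul_of_nonneg_left hqmaxge hθpos.le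
    linarith [eqW, hQ, hq_xθ, hq_bθ, hprod, key3]
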